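/- Let G = K_{m,n} with 0 < σ < m loops, all placed within the part M of size m. Then the nonzero, non-one eigenvalues of G_S are exactly the three roots of p(λ) = λ³ − λ² − mnλ + n(m−σ), each simple, and these three roots lie in the intervals (−∞,0), (0,1), and (1,∞) respectively; the remaining eigenvalues are 1 with multiplicity σ−1 and 0 with multiplicity m+n−σ−2. -/

import Mathlib

open Matrix Finset Polynomial

/-- Adjacency matrix of the complete bipartite graph `K_{m,n}` with parts `Fin m` and `Fin n`. -/
def adjKmn (m n : ℕ) : Matrix (Fin m ⊕ Fin n) (Fin m ⊕ Fin n) ℝ :=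
  Matrix.of fun i j =>
    match i, j with
    | Sum.inl _, Sum.inr _ => 1
    | Sum.inr _, Sum.inl _ => 1
    | _, _ => 0

/-- The diagonal 0-1 matrix indicating loops at `SM ⊆ M` (all loops within the part `M`). -/
def loopMatSM (m n : ℕ) (SM : Finset (Fin m)) :
    Matrix (Fin m ⊕ Fin n) (Fin m ⊕ Fin n) ℝ :=
  Matrix.of fun i j =>
    match i, j with
    | Sum.inl a, Sum.inl b => if a = b ∧ a ∈ SM then 1 else 0
    | _, _ => 0

lemma aux_charpoly_conj {N : Type*} [Fintype N] [DecidableEq N]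
    (U M V : Matrix N N ℝ) (hUV : U * V = 1) :
    (U * M * V).charpoly = M.charpoly := by
  have hmap : ∀ P Q : Matrix N N ℝ,
      (P * Q).map (C : ℝ →+* ℝ[X]) = P.map C * Q.map C := fun P Q => by
    simp [Matrix.map_mul]
  have hUV' : U.map (C : ℝ →+* ℝ[X]) * V.map C = 1 := by
    rw [← hmap, hUV]; simp
  have key : charmatrix (U * M * V) =
      U.map (C : ℝ →+* ℝ[X]) * charmatrix M * V.map C := by
    rw [charmatrix, charmatrix]
    rw [Matrix.mul_sub, Matrix.sub_mul]
    congr 1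
    · symm
      rw [← (scalar_commute (X : ℝ[X]) (fun r => Commute.all _ _) (U.map C)).eq,
        Matrix.mul_assoc, hUV', Matrix.mul_one]
    · simp only [RingHom.mapMatrix_apply]
      rw [hmap, hmap]
  rw [Matrix.charpoly, Matrix.charpoly, key, det_mul, det_mul, mul_comm, ← mul_assoc, ← det_mul,
    ← hmap, mul_eq_one_comm.mp hUV]
  simp

lemma aux_charpoly_diagonal {N : Type*} [Fintype N] [DecidableEq N] (d : N → ℝ) :
    (Matrix.diagonal d).charpoly = ∏ i, (X - C (d i)) := by
  have : charmatrix (Matrix.diagonal d) = Matrix.diagonal (fun i => X - C (d i)) := by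
    ext i j
    by_cases h : i = j
    · subst h; simp
    · simp [charmatrix_apply_ne _ _ _ h, Matrix.diagonal_apply_ne _ h]
  rw [Matrix.charpoly, this, det_diagonal]

lemma aux_charpoly_hermitian {N : Type*} [Fintype N] [DecidableEq N] {A : Matrix N N ℝ}
    (hA : A.IsHermitian) :
    A.charpoly = ∏ i, (X - C (hA.eigenvalues i)) := by
  conv_lhs => rw [hA.spectral_theorem]
  rw [Unitary.conjStarAlgAut_apply, aux_charpoly_conj _ _ _ (Matrix.mem_unitaryGroup_iff.mp (hA.eigenvectorUnitary).2)]
  have : (RCLike.ofReal ∘ hA.eigenvalues : N → ℝ) = hA.eigenvalues := by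
    ext i; simp
  rw [this, aux_charpoly_diagonal]

lemma aux_eigs_eq_roots {N : Type*} [Fintype N] [DecidableEq N] {A : Matrix N N ℝ}
    (hA : A.IsHermitian) :
    Finset.univ.val.map hA.eigenvalues = A.charpoly.roots := by
  rw [aux_charpoly_hermitian hA]
  have : (∏ i, (X - C (hA.eigenvalues i))) =
      ((Finset.univ.val.map hA.eigenvalues).map fun a => X - C a).prod := by
    rw [Multiset.map_map]; rfl
  rw [this, roots_multiset_prod_X_sub_C]

lemma aux_eval_charpoly {N : Type*} [Fintype N] [DecidableEq N] (A : Matrix N N ℝ) (x : ℝ) :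
    (A.charpoly).eval x = (x • (1 : Matrix N N ℝ) - A).det := by
  rw [Matrix.charpoly, ← Polynomial.coe_evalRingHom, RingHom.map_det]
  congr 1
  ext i j
  by_cases h : i = j <;>
    simp [charmatrix_apply, h, Matrix.one_apply, Matrix.diagonal_apply]

lemma aux_det (m n : ℕ) (SM : Finset (Fin m)) (x : ℝ) (hx0 : x ≠ 0) (hx1 : x - 1 ≠ 0) :
    (x • (1 : Matrix (Fin m ⊕ Fin n) (Fin m ⊕ Fin n) ℝ) - (adjKmn m n + loopMatSM m n SM)).det
    = x ^ n * (((x - 1) ^ SM.card * x ^ (m - SM.card)) *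
        (1 - ((n : ℝ) / x) * ((SM.card : ℝ) / (x - 1) + ((m - SM.card : ℕ) : ℝ) / x))) := by
  classical
  set B₁ : Matrix (Fin m) (Fin m) ℝ :=
    x • 1 - Matrix.of (fun a b => if a = b ∧ a ∈ SM then (1 : ℝ) else 0) with hB₁
  have hblock : x • (1 : Matrix (Fin m ⊕ Fin n) (Fin m ⊕ Fin n) ℝ)
      - (adjKmn m n + loopMatSM m n SM)
      = fromBlocks B₁ (Matrix.of fun _ _ => (-1 : ℝ)) (Matrix.of fun _ _ => (-1 : ℝ))
          (x • 1) := by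
    ext i j
    rcases i with a | a <;> rcases j with b | b <;>
      simp [adjKmn, loopMatSM, hB₁, Matrix.one_apply, Matrix.smul_apply]
  have hmulinv : (x • (1 : Matrix (Fin n) (Fin n) ℝ)) * (x⁻¹ • 1) = 1 := by
    rw [Matrix.smul_mul, Matrix.mul_smul, smul_smul, Matrix.mul_one, mul_inv_cancel₀ hx0,
      one_smul]
  haveI : Invertible (x • (1 : Matrix (Fin n) (Fin n) ℝ)) :=
    ⟨x⁻¹ • 1, mul_eq_one_comm.mp hmulinv, hmulinv⟩
  rw [hblock, det_fromBlocks₂₂, invOf_eq_right_inv hmulinv]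
  have h2 : (Matrix.of fun _ _ => (-1 : ℝ) : Matrix (Fin m) (Fin n) ℝ)
      * (x⁻¹ • (1 : Matrix (Fin n) (Fin n) ℝ))
      * (Matrix.of fun _ _ => (-1 : ℝ) : Matrix (Fin n) (Fin m) ℝ)
      = Matrix.of fun _ _ => (n : ℝ) / x := by
    rw [Matrix.mul_smul, Matrix.mul_one, Matrix.smul_mul]
    ext i j
    simp only [Matrix.smul_apply, Matrix.mul_apply, Matrix.of_apply, neg_mul_neg, mul_one,
      Finset.sum_const, Finset.card_univ, Fintype.card_fin, nsmul_eq_mul, smul_eq_mul]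
    ring
  rw [h2]
  set d : Fin m → ℝ := fun i => if i ∈ SM then x - 1 else x with hd
  have hdne : ∀ i, d i ≠ 0 := by
    intro i; by_cases h : i ∈ SM <;> simp [hd, h, hx0, hx1]
  set u : Fin m → ℝ := fun i => -((n : ℝ) / x) / d i with hu
  have hfact : B₁ - Matrix.of (fun _ _ => (n : ℝ) / x)
      = Matrix.diagonal d * (1 + Matrix.replicateCol Unit u * Matrix.replicateRow Unit (fun _ => (1 : ℝ))) := by
    ext i j
    rw [Matrix.diagonal_mul]
    have : ((1 + Matrix.replicateCol Unit u * Matrix.replicateRow Unit (fun _ => (1 : ℝ))) :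
        Matrix (Fin m) (Fin m) ℝ) i j = (if i = j then 1 else 0) + u i := by
      simp [Matrix.one_apply, Matrix.mul_apply]
    rw [this]
    by_cases hij : i = j
    · subst hij
      by_cases hi : i ∈ SM <;>
      · simp only [hB₁, hd, hu, Matrix.sub_apply, Matrix.smul_apply, Matrix.one_apply_eq,
          Matrix.of_apply, hi, if_true, if_false, and_true, and_false, if_pos rfl, smul_eq_mul,
          mul_one]
        field_simp
        ring
    · have : ¬ (i = j ∧ i ∈ SM) := fun h => hij h.1
      simp only [hB₁, hd, hu, Matrix.sub_apply, Matrix.smul_apply, Matrix.one_apply_ne hij,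
        Matrix.of_apply, if_neg this, if_neg hij, smul_eq_mul, mul_zero, sub_zero, zero_sub,
        zero_add]
      by_cases hi : i ∈ SM <;> simp only [hi, if_true, if_false] <;> field_simp <;> ring
  rw [hfact, det_mul, det_diagonal, Matrix.det_one_add_replicateCol_mul_replicateRow]
  have hcardnot : (univ.filter (fun i : Fin m => ¬ i ∈ SM)).card = m - SM.card := by
    rw [Finset.filter_not, Finset.filter_univ_mem, Finset.card_sdiff_of_subset (Finset.subset_univ _),
      Finset.card_univ, Fintype.card_fin]
  have hprod : ∏ i, d i = (x - 1) ^ SM.card * x ^ (m - SM.card) := by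
    rw [← Finset.prod_filter_mul_prod_filter_not univ (· ∈ SM), Finset.filter_univ_mem,
      Finset.prod_eq_pow_card (s := SM) (f := d) (b := x - 1) (fun i hi => by simp [hd, hi]),
      Finset.prod_eq_pow_card (s := univ.filter (fun i => ¬ i ∈ SM)) (f := d) (b := x)
        (fun i hi => by simp only [Finset.mem_filter] at hi; simp [hd, hi.2]),
      hcardnot]
  have hdot : (fun _ => (1 : ℝ)) ⬝ᵥ u
      = -(((n : ℝ) / x) * ((SM.card : ℝ) / (x - 1) + ((m - SM.card : ℕ) : ℝ) / x)) := by
    simp only [dotProduct, one_mul]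
    rw [← Finset.sum_filter_add_sum_filter_not univ (· ∈ SM), Finset.filter_univ_mem,
      Finset.sum_eq_card_nsmul (s := SM) (f := u) (b := -((n : ℝ) / x) / (x - 1))
        (fun i hi => by simp only [hu, hd, hi, if_true]),
      Finset.sum_eq_card_nsmul (s := univ.filter (fun i => ¬ i ∈ SM)) (f := u)
        (b := -((n : ℝ) / x) / x)
        (fun i hi => by
          simp only [Finset.mem_filter] at hi; simp only [hu, hd, hi.2, if_false]),
      hcardnot]
    simp only [nsmul_eq_mul]
    ring
  rw [hprod, hdot, Matrix.det_smul, det_one, Fintype.card_fin]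
  ring

/-- for `0 < σ < m`, the spectrum of `(K_{m,n})_S` with all `σ` loops inside `M`
consists of `1` with multiplicity `σ - 1`, `0` with multiplicity `m + n - σ - 2`, and the
three simple roots of `p(λ) = λ³ − λ² − mnλ + n(m − σ)`, lying in `(−∞,0)`, `(0,1)` and
`(1,∞)` respectively. -/
theorem spec_Kmn_loops_in_M (m n : ℕ) (hm : 2 ≤ m) (hn : 0 < n)
    (SM : Finset (Fin m)) (h0 : 0 < SM.card) (h1 : SM.card < m)
    (hA : (adjKmn m n + loopMatSM m n SM).IsHermitian) :
    ∃ l1 l2 l3 : ℝ,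
      l1 < 0 ∧ 0 < l2 ∧ l2 < 1 ∧ 1 < l3 ∧
      (∀ l ∈ ({l1, l2, l3} : Set ℝ),
        l ^ 3 - l ^ 2 - (m : ℝ) * n * l + (n : ℝ) * ((m : ℝ) - SM.card) = 0) ∧
      Finset.univ.val.map hA.eigenvalues =
        Multiset.replicate (SM.card - 1) (1 : ℝ) +
        Multiset.replicate (m + n - SM.card - 2) (0 : ℝ) +
        {l1, l2, l3} := by
  classical
  set σ := SM.card with hσdef
  clear_value σ
  -- ROOTS OF THE CUBIC
  set p : ℝ → ℝ := fun x => x ^ 3 - x ^ 2 - (m : ℝ) * n * x + (n : ℝ) * ((m : ℝ) - σ)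
    with hp
  have hc : Continuous p := by fun_prop
  have hS1 : (1 : ℝ) ≤ σ := by exact_mod_cast h0
  have hSM : (σ : ℝ) + 1 ≤ m := by exact_mod_cast h1
  have hN1 : (1 : ℝ) ≤ n := by exact_mod_cast hn
  have hM2 : (2 : ℝ) ≤ m := by exact_mod_cast hm
  have hp0 : 0 < p 0 := by simp only [hp]; nlinarith
  have hp1 : p 1 < 0 := by simp only [hp]; nlinarith
  set x0 : ℝ := -((m : ℝ) * n + 2) with hx0def
  set x1 : ℝ := (m : ℝ) * n + 2 with hx1def
  have hx0neg : x0 < 0 := by nlinarith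
  have hx1pos : (1 : ℝ) < x1 := by nlinarith
  have hpx0 : p x0 < 0 := by
    simp only [hp, hx0def]
    nlinarith [sq_nonneg ((m:ℝ)*n), sq_nonneg ((m:ℝ)*n + 2),
      mul_pos (lt_of_lt_of_le one_pos hN1) (by nlinarith : (0:ℝ) < (m:ℝ) - σ)]
  have hpx1 : 0 < p x1 := by
    simp only [hp, hx1def]
    nlinarith [mul_pos (lt_of_lt_of_le one_pos hN1) (by nlinarith : (0:ℝ) < (m:ℝ) - σ),
      mul_nonneg (sq_nonneg ((m:ℝ)*n+2)) (by nlinarith : (0:ℝ) ≤ (m:ℝ)*n)]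
  obtain ⟨l1, hl1mem, hl1⟩ :=
    intermediate_value_Ioo (le_of_lt hx0neg) hc.continuousOn ⟨hpx0, hp0⟩
  obtain ⟨l2, hl2mem, hl2⟩ :=
    intermediate_value_Ioo' (by norm_num : (0:ℝ) ≤ 1) hc.continuousOn ⟨hp1, hp0⟩
  obtain ⟨l3, hl3mem, hl3⟩ :=
    intermediate_value_Ioo (le_of_lt hx1pos) hc.continuousOn ⟨hp1, hpx1⟩
  have h1neg : l1 < 0 := hl1mem.2
  have h2pos : 0 < l2 := hl2mem.1
  have h2lt : l2 < 1 := hl2mem.2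
  have h3gt : 1 < l3 := hl3mem.1
  have h12 : l1 ≠ l2 := ne_of_lt (lt_trans h1neg h2pos)
  have h13 : l1 ≠ l3 := ne_of_lt (by linarith)
  have h23 : l2 ≠ l3 := ne_of_lt (by linarith)
  -- THE CUBIC POLYNOMIAL AND ITS FACTORIZATION
  set P : ℝ[X] := X ^ 3 - X ^ 2 - C ((m : ℝ) * n) * X + C ((n : ℝ) * ((m : ℝ) - σ)) with hP
  have hevalP : ∀ y : ℝ, P.eval y = p y := by
    intro y; simp [hP, hp]
  set Q : ℝ[X] := (X - C l1) * ((X - C l2) * (X - C l3)) with hQ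
  have hmonP : P.Monic := by
    unfold P
    monicity!
  have hmonQ : Q.Monic :=
    ((monic_X_sub_C l1).mul ((monic_X_sub_C l2).mul (monic_X_sub_C l3)))
  have hdegP : P.natDegree = 3 := by
    unfold P
    compute_degree!
  have hdegQ : Q.natDegree = 3 := by
    unfold Q
    compute_degree!
  have hcard3 : ({l1, l2, l3} : Finset ℝ).card = 3 := by
    rw [Finset.card_insert_of_notMem (by simp [h12, h13]),
      Finset.card_insert_of_notMem (by simp [h23]), Finset.card_singleton]
  have hPQ : P = Q := by
    have hevalQ : ∀ l ∈ ({l1, l2, l3} : Finset ℝ), (P - Q).eval l = 0 := by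
      intro l hl
      simp only [Finset.mem_insert, Finset.mem_singleton] at hl
      rcases hl with rfl | rfl | rfl <;>
        simp [hQ, hevalP, hl1, hl2, hl3]
    rcases eq_or_ne (P - Q) 0 with h | h
    · exact sub_eq_zero.mp h
    · exfalso
      apply h
      refine eq_zero_of_natDegree_lt_card_of_eval_eq_zero' (P - Q) {l1, l2, l3} hevalQ ?_
      rw [hcard3]
      rw [Polynomial.natDegree_lt_iff_degree_lt h]
      have : degree (P - Q) < degree P := by
        refine degree_sub_lt ?_ hmonP.ne_zero ?_
        · rw [degree_eq_natDegree hmonP.ne_zero, degree_eq_natDegree hmonQ.ne_zero, hdegP, hdegQ]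
        · rw [hmonP.leadingCoeff, hmonQ.leadingCoeff]
      rw [degree_eq_natDegree hmonP.ne_zero, hdegP] at this
      exact_mod_cast this
  -- CHARPOLY COMPUTATION
  obtain ⟨s', hs'⟩ : ∃ s', σ = s' + 1 := ⟨σ - 1, by omega⟩
  obtain ⟨a', ha'⟩ : ∃ a', m - σ = a' + 1 := ⟨m - σ - 1, by omega⟩
  obtain ⟨n', hn'⟩ : ∃ n', n = n' + 1 := ⟨n - 1, by omega⟩
  have he2 : m + n - σ - 2 = a' + n' := by omega
  have he3 : σ - 1 = s' := by omega
  set T : ℝ[X] := X ^ (m + n - σ - 2) * (X - C 1) ^ (σ - 1) * P with hT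
  have hchar : (adjKmn m n + loopMatSM m n SM).charpoly = T := by
    apply eq_of_infinite_eval_eq
    apply Set.Infinite.mono (s := ({(0:ℝ), 1} : Set ℝ)ᶜ)
    · intro x hx
      simp only [Set.mem_compl_iff, Set.mem_insert_iff, Set.mem_singleton_iff, not_or] at hx
      obtain ⟨hx0, hx1⟩ := hx
      have hx1' : x - 1 ≠ 0 := sub_ne_zero.mpr hx1
      show _ = _
      rw [aux_eval_charpoly, aux_det m n SM x hx0 hx1']
      have hevT : T.eval x = x ^ (m + n - σ - 2) * (x - 1) ^ (σ - 1) * p x := by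
        simp [hT, hevalP]
      rw [hevT, hp]
      rw [← hσdef, ha', he2, he3, hn', hs', show m = s' + 1 + (a' + 1) from by omega]
      push_cast
      field_simp
      ring
    · exact Set.Finite.infinite_compl (by simp)
  -- ROOTS OF T
  have hQne : Q ≠ 0 := hmonQ.ne_zero
  have hrootsQ : Q.roots = {l1, l2, l3} := by
    rw [hQ, Polynomial.roots_mul (by rw [← hQ]; exact hQne),
      Polynomial.roots_mul (mul_ne_zero (X_sub_C_ne_zero l2) (X_sub_C_ne_zero l3)),
      roots_X_sub_C, roots_X_sub_C, roots_X_sub_C]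
    rfl
  have hrootsT : T.roots = Multiset.replicate (m + n - σ - 2) 0 +
      Multiset.replicate (σ - 1) 1 + {l1, l2, l3} := by
    rw [hT, hPQ]
    rw [Polynomial.roots_mul (mul_ne_zero (mul_ne_zero (pow_ne_zero _ X_ne_zero)
        (pow_ne_zero _ (X_sub_C_ne_zero 1))) hQne),
      Polynomial.roots_mul (mul_ne_zero (pow_ne_zero _ X_ne_zero)
        (pow_ne_zero _ (X_sub_C_ne_zero 1)))]
    rw [Polynomial.roots_pow, Polynomial.roots_pow, roots_X, roots_X_sub_C, hrootsQ]
    rw [Multiset.nsmul_singleton, Multiset.nsmul_singleton]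
  refine ⟨l1, l2, l3, h1neg, h2pos, h2lt, h3gt, ?_, ?_⟩
  · rintro l (rfl | rfl | rfl)
    · exact hl1
    · exact hl2
    · exact hl3
  · rw [aux_eigs_eq_roots hA, hchar, hrootsT,
      add_comm (Multiset.replicate (m + n - σ - 2) (0:ℝ)) (Multiset.replicate (σ - 1) (1:ℝ))]
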